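/- It is impossible to partition the unit square Q = [0,1]×[0,1] into five disjoint sets A_0, A_1, A_2, A_3, A_4 satisfying: (0,1) ∈ A_2 and (1,1) ∈ A_1; A_4 does not meet the side [0,1]×{1}; A_0 does not meet the other three sides; A_3, A_2 ∪ A_4, and A_1 ∪ A_3 ∪ A_4 are closed; A_0 is open with ∂A_0 ⊆ A_2 ∪ A_3 ∪ A_4. -/

import Mathlib

open Set

/-- The unit square in `ℝ²`. -/
def unitSquare : Set (ℝ × ℝ) := Icc 0 1 ×ˢ Icc 0 1

/-- `A` is closed relative to the subspace `Q`. -/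
def relClosed (Q A : Set (ℝ × ℝ)) : Prop := closure A ∩ Q ⊆ A

/-- The boundary of `A` relative to the subspace `Q`. -/
def relFrontier (Q A : Set (ℝ × ℝ)) : Set (ℝ × ℝ) :=
  Q ∩ closure A ∩ closure (Q \ A)


open Metric

noncomputable def rho (C1 C2 : Set (ℝ × ℝ)) (x : ℝ × ℝ) : ℝ :=
  infDist x C1 / (infDist x C1 + infDist x C2)

noncomputable def liftN (C1 C2 : Set (ℝ × ℝ)) (φ : ℝ × ℝ → ℝ) (x : ℝ × ℝ) : ℝ :=
  φ x * (1 - 2 * rho C1 C2 x)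

noncomputable def liftP (C1 C2 : Set (ℝ × ℝ)) (φ : ℝ × ℝ → ℝ) (x : ℝ × ℝ) : ℝ :=
  φ x + 2 * (1 - φ x) * rho C1 C2 x

def IsLift (C1 C2 : Set (ℝ × ℝ)) (φ : ℝ × ℝ → ℝ) (R : Set (ℝ × ℝ)) (f : ℝ × ℝ → ℝ) : Prop :=
  ContinuousOn f R ∧ ∀ x ∈ R,
    (x ∈ C1 → ∃ k : ℤ, f x = φ x + 2 * k) ∧ (x ∈ C2 → ∃ k : ℤ, f x = 2 - φ x + 2 * k)

def Liftable (C1 C2 : Set (ℝ × ℝ)) (φ : ℝ × ℝ → ℝ) (R : Set (ℝ × ℝ)) : Prop :=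
  ∃ f, IsLift C1 C2 φ R f

lemma parity_const {f : ℝ × ℝ → ℝ} {s : Set (ℝ × ℝ)} (hs : IsPreconnected s)
    (hf : ContinuousOn f s) (hint : ∀ x ∈ s, ∃ k : ℤ, f x = 2 * k)
    {x y : ℝ × ℝ} (hx : x ∈ s) (hy : y ∈ s) : f x = f y := by
  have himg : IsPreconnected (f '' s) := hs.image f hf
  obtain ⟨kx, hkx⟩ := hint x hx
  obtain ⟨ky, hky⟩ := hint y hy
  have main : ∀ u v : ℝ × ℝ, u ∈ s → v ∈ s → ∀ ku kv : ℤ, f u = 2 * ku → f v = 2 * kv →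
      ku < kv → False := by
    intro u v hu hv ku kv hku hkv hlt
    have hk1 : (ku : ℝ) + 1 ≤ (kv : ℝ) := by exact_mod_cast hlt
    have h1 : (2 * (ku : ℝ) + 1) ∈ Icc (f u) (f v) := by
      constructor
      · rw [hku]; linarith
      · rw [hkv]; linarith
    obtain ⟨z, hz, hfz⟩ := himg.Icc_subset ⟨u, hu, rfl⟩ ⟨v, hv, rfl⟩ h1
    obtain ⟨m, hm⟩ := hint z hz
    rw [hm] at hfz
    have : (2 * m : ℤ) = 2 * ku + 1 := by exact_mod_cast hfz
    omega
  rcases lt_trichotomy kx ky with h | h | h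
  · exact (main x y hx hy kx ky hkx hky h).elim
  · rw [hkx, hky, h]
  · exact (main y x hy hx ky kx hky hkx h).elim

section Rho

variable {C1 C2 : Set (ℝ × ℝ)} {x : ℝ × ℝ}

lemma rho_mem_Icc (C1 C2 : Set (ℝ × ℝ)) (x : ℝ × ℝ) : rho C1 C2 x ∈ Icc (0 : ℝ) 1 := by
  have h1 : 0 ≤ infDist x C1 := infDist_nonneg
  have h2 : 0 ≤ infDist x C2 := infDist_nonneg
  rcases eq_or_lt_of_le (add_nonneg h1 h2) with h | h
  · have : infDist x C1 = 0 := by linarith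
    simp [rho, this]
  · exact ⟨div_nonneg h1 (by linarith), (div_le_one h).2 (by linarith)⟩

lemma rho_eq_zero (hx : x ∈ C1) : rho C1 C2 x = 0 := by
  simp [rho, infDist_zero_of_mem hx]

lemma rho_eq_one (hC1 : IsClosed C1) (hne : C1.Nonempty) (hx2 : x ∈ C2) (hx1 : x ∉ C1) :
    rho C1 C2 x = 1 := by
  have h2 : infDist x C2 = 0 := infDist_zero_of_mem hx2
  have h1 : infDist x C1 ≠ 0 := by
    intro h
    exact hx1 (by rw [← hC1.closure_eq]; exact (mem_closure_iff_infDist_zero hne).2 h)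
  rw [rho, h2, add_zero, div_self h1]

lemma rho_continuousAt (hC1 : IsClosed C1) (hC2 : IsClosed C2) (hne1 : C1.Nonempty)
    (hne2 : C2.Nonempty) (hx : x ∉ C1 ∩ C2) : ContinuousAt (rho C1 C2) x := by
  have hden : infDist x C1 + infDist x C2 ≠ 0 := by
    intro h
    have h1 : 0 ≤ infDist x C1 := infDist_nonneg
    have h2 : 0 ≤ infDist x C2 := infDist_nonneg
    have e1 : infDist x C1 = 0 := by linarith
    have e2 : infDist x C2 = 0 := by linarith
    exact hx ⟨by rw [← hC1.closure_eq]; exact (mem_closure_iff_infDist_zero hne1).2 e1,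
      by rw [← hC2.closure_eq]; exact (mem_closure_iff_infDist_zero hne2).2 e2⟩
  exact ((continuous_infDist_pt C1).continuousAt).div
    (((continuous_infDist_pt C1).add (continuous_infDist_pt C2)).continuousAt) hden

end Rho

section Lifts

variable {C1 C2 : Set (ℝ × ℝ)} {φ : ℝ × ℝ → ℝ} {x : ℝ × ℝ}

lemma liftN_eq_of_mem_C1 (hx : x ∈ C1) : liftN C1 C2 φ x = φ x := by
  simp [liftN, rho_eq_zero hx]

lemma liftN_eq_of_mem_C2 (hC1 : IsClosed C1) (hne : C1.Nonempty) (hx2 : x ∈ C2)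
    (hx1 : x ∉ C1) : liftN C1 C2 φ x = -φ x := by
  rw [liftN, rho_eq_one hC1 hne hx2 hx1]; ring

lemma liftP_eq_of_mem_C1 (hx : x ∈ C1) : liftP C1 C2 φ x = φ x := by
  simp [liftP, rho_eq_zero hx]

lemma liftP_eq_of_mem_C2 (hC1 : IsClosed C1) (hne : C1.Nonempty) (hx2 : x ∈ C2)
    (hx1 : x ∉ C1) : liftP C1 C2 φ x = 2 - φ x := by
  rw [liftP, rho_eq_one hC1 hne hx2 hx1]; ring

lemma liftN_continuousOn (hC1 : IsClosed C1) (hC2 : IsClosed C2) (hne1 : C1.Nonempty)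
    (hne2 : C2.Nonempty) (hφ : Continuous φ) (hval : ∀ y ∈ C1 ∩ C2, φ y = 0 ∨ φ y = 1) :
    ContinuousOn (liftN C1 C2 φ) ((C1 ∪ C2) \ {y | y ∈ C1 ∩ C2 ∧ φ y = 1}) := by
  intro x hx
  by_cases hmem : x ∈ C1 ∩ C2
  · have hφ0 : φ x = 0 := by
      rcases hval x hmem with h | h
      · exact h
      · exact absurd ⟨hmem, h⟩ hx.2
    apply ContinuousAt.continuousWithinAt
    have h0 : liftN C1 C2 φ x = 0 := by rw [liftN, hφ0]; ring
    rw [ContinuousAt, h0]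
    have hbound : ∀ y, |liftN C1 C2 φ y| ≤ 3 * |φ y| := by
      intro y
      have hr := rho_mem_Icc C1 C2 y
      rw [liftN, abs_mul]
      have : |1 - 2 * rho C1 C2 y| ≤ 3 := by
        rw [abs_le]; constructor <;> [linarith [hr.2]; linarith [hr.1]]
      calc |φ y| * |1 - 2 * rho C1 C2 y| ≤ |φ y| * 3 :=
            mul_le_mul_of_nonneg_left this (abs_nonneg _)
        _ = 3 * |φ y| := by ring
    have hg : Filter.Tendsto (fun y => 3 * |φ y|) (nhds x) (nhds 0) := by
      have : Filter.Tendsto (fun y => 3 * |φ y|) (nhds x) (nhds (3 * |φ x|)) :=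
        (continuous_const.mul hφ.abs).continuousAt
      rwa [hφ0, abs_zero, mul_zero] at this
    have habs : Filter.Tendsto (fun y => |liftN C1 C2 φ y|) (nhds x) (nhds 0) :=
      squeeze_zero (fun y => abs_nonneg _) hbound hg
    exact tendsto_zero_iff_abs_tendsto_zero _ |>.2 habs
  · apply ContinuousAt.continuousWithinAt
    have : ContinuousAt (fun y => φ y * (1 - 2 * rho C1 C2 y)) x :=
      hφ.continuousAt.mul (continuousAt_const.sub
        (continuousAt_const.mul (rho_continuousAt hC1 hC2 hne1 hne2 hmem)))
    exact this

lemma liftP_continuousOn (hC1 : IsClosed C1) (hC2 : IsClosed C2) (hne1 : C1.Nonempty)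
    (hne2 : C2.Nonempty) (hφ : Continuous φ) (hval : ∀ y ∈ C1 ∩ C2, φ y = 0 ∨ φ y = 1) :
    ContinuousOn (liftP C1 C2 φ) ((C1 ∪ C2) \ {y | y ∈ C1 ∩ C2 ∧ φ y = 0}) := by
  intro x hx
  by_cases hmem : x ∈ C1 ∩ C2
  · have hφ1 : φ x = 1 := by
      rcases hval x hmem with h | h
      · exact absurd ⟨hmem, h⟩ hx.2
      · exact h
    apply ContinuousAt.continuousWithinAt
    have h1 : liftP C1 C2 φ x = 1 := by
      rw [liftP, rho_eq_zero hmem.1, hφ1]; ring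
    rw [ContinuousAt, h1]
    rw [← tendsto_sub_nhds_zero_iff]
    have hbound : ∀ y, |liftP C1 C2 φ y - 1| ≤ 3 * |φ y - 1| := by
      intro y
      have hr := rho_mem_Icc C1 C2 y
      have heq : liftP C1 C2 φ y - 1 = (φ y - 1) * (1 - 2 * rho C1 C2 y) := by
        rw [liftP]; ring
      rw [heq, abs_mul]
      have : |1 - 2 * rho C1 C2 y| ≤ 3 := by
        rw [abs_le]; constructor <;> [linarith [hr.2]; linarith [hr.1]]
      calc |φ y - 1| * |1 - 2 * rho C1 C2 y| ≤ |φ y - 1| * 3 :=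
            mul_le_mul_of_nonneg_left this (abs_nonneg _)
        _ = 3 * |φ y - 1| := by ring
    have hg : Filter.Tendsto (fun y => 3 * |φ y - 1|) (nhds x) (nhds 0) := by
      have : Filter.Tendsto (fun y => 3 * |φ y - 1|) (nhds x) (nhds (3 * |φ x - 1|)) :=
        (continuous_const.mul ((hφ.sub continuous_const).abs)).continuousAt
      rwa [hφ1, sub_self, abs_zero, mul_zero] at this
    have habs : Filter.Tendsto (fun y => |liftP C1 C2 φ y - 1|) (nhds x) (nhds 0) :=
      squeeze_zero (fun y => abs_nonneg _) hbound hg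
    exact tendsto_zero_iff_abs_tendsto_zero _ |>.2 habs
  · apply ContinuousAt.continuousWithinAt
    have : ContinuousAt (fun y => φ y + 2 * (1 - φ y) * rho C1 C2 y) x :=
      hφ.continuousAt.add ((continuousAt_const.mul
        (continuousAt_const.sub hφ.continuousAt)).mul
        (rho_continuousAt hC1 hC2 hne1 hne2 hmem))
    exact this

lemma isLift_liftN (hC1 : IsClosed C1) (hC2 : IsClosed C2) (hne1 : C1.Nonempty)
    (hne2 : C2.Nonempty) (hφ : Continuous φ) (hval : ∀ y ∈ C1 ∩ C2, φ y = 0 ∨ φ y = 1)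
    {R : Set (ℝ × ℝ)} (hR : R ⊆ C1 ∪ C2)
    (hRP : ∀ y ∈ R, ¬(y ∈ C1 ∩ C2 ∧ φ y = 1)) : IsLift C1 C2 φ R (liftN C1 C2 φ) := by
  constructor
  · exact (liftN_continuousOn hC1 hC2 hne1 hne2 hφ hval).mono
      (fun y hy => ⟨hR hy, hRP y hy⟩)
  · intro x hx
    constructor
    · intro hc
      exact ⟨0, by rw [liftN_eq_of_mem_C1 hc]; push_cast; ring⟩
    · intro hc
      by_cases h1 : x ∈ C1
      · have hφ0 : φ x = 0 := by
          rcases hval x ⟨h1, hc⟩ with h | h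
          · exact h
          · exact absurd ⟨⟨h1, hc⟩, h⟩ (hRP x hx)
        exact ⟨-1, by rw [liftN_eq_of_mem_C1 h1, hφ0]; push_cast; ring⟩
      · exact ⟨-1, by rw [liftN_eq_of_mem_C2 hC1 hne1 hc h1]; push_cast; ring⟩

lemma isLift_liftP (hC1 : IsClosed C1) (hC2 : IsClosed C2) (hne1 : C1.Nonempty)
    (hne2 : C2.Nonempty) (hφ : Continuous φ) (hval : ∀ y ∈ C1 ∩ C2, φ y = 0 ∨ φ y = 1)
    {R : Set (ℝ × ℝ)} (hR : R ⊆ C1 ∪ C2)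
    (hRN : ∀ y ∈ R, ¬(y ∈ C1 ∩ C2 ∧ φ y = 0)) : IsLift C1 C2 φ R (liftP C1 C2 φ) := by
  constructor
  · exact (liftP_continuousOn hC1 hC2 hne1 hne2 hφ hval).mono
      (fun y hy => ⟨hR hy, hRN y hy⟩)
  · intro x hx
    constructor
    · intro hc
      exact ⟨0, by rw [liftP_eq_of_mem_C1 hc]; push_cast; ring⟩
    · intro hc
      by_cases h1 : x ∈ C1
      · have hφ1 : φ x = 1 := by
          rcases hval x ⟨h1, hc⟩ with h | h
          · exact absurd ⟨⟨h1, hc⟩, h⟩ (hRN x hx)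
          · exact h
        exact ⟨0, by rw [liftP_eq_of_mem_C1 h1, hφ1]; push_cast; ring⟩
      · exact ⟨0, by rw [liftP_eq_of_mem_C2 hC1 hne1 hc h1]; push_cast; ring⟩

end Lifts

section Glue

variable {C1 C2 : Set (ℝ × ℝ)} {φ : ℝ × ℝ → ℝ}

lemma glue_horiz {a b b' c d : ℝ} (hab : a ≤ b) (hbb' : b ≤ b') (hcd : c ≤ d)
    (hsub : (Icc a b' ×ˢ Icc c d : Set (ℝ × ℝ)) ⊆ C1 ∪ C2)
    (h1 : Liftable C1 C2 φ (Icc a b ×ˢ Icc c d))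
    (h2 : Liftable C1 C2 φ (Icc b b' ×ˢ Icc c d)) :
    Liftable C1 C2 φ (Icc a b' ×ˢ Icc c d) := by
  obtain ⟨f1, hf1c, hf1⟩ := h1
  obtain ⟨f2, hf2c, hf2⟩ := h2
  have hSsub1 : (Icc b b ×ˢ Icc c d : Set (ℝ × ℝ)) ⊆ Icc a b ×ˢ Icc c d :=
    prod_mono (Icc_subset_Icc hab le_rfl) subset_rfl
  have hSsub2 : (Icc b b ×ˢ Icc c d : Set (ℝ × ℝ)) ⊆ Icc b b' ×ˢ Icc c d :=
    prod_mono (Icc_subset_Icc le_rfl hbb') subset_rfl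
  have hSbig : (Icc b b ×ˢ Icc c d : Set (ℝ × ℝ)) ⊆ Icc a b' ×ˢ Icc c d :=
    prod_mono (Icc_subset_Icc hab hbb') subset_rfl
  have hdiff : ∀ x ∈ (Icc b b ×ˢ Icc c d : Set (ℝ × ℝ)), ∃ k : ℤ, f1 x - f2 x = 2 * k := by
    intro x hx
    have hx1 := hf1 x (hSsub1 hx)
    have hx2 := hf2 x (hSsub2 hx)
    rcases hsub (hSbig hx) with hc | hc
    · obtain ⟨k1, e1⟩ := hx1.1 hc
      obtain ⟨k2, e2⟩ := hx2.1 hc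
      exact ⟨k1 - k2, by rw [e1, e2]; push_cast; ring⟩
    · obtain ⟨k1, e1⟩ := hx1.2 hc
      obtain ⟨k2, e2⟩ := hx2.2 hc
      exact ⟨k1 - k2, by rw [e1, e2]; push_cast; ring⟩
  have hSconn : IsPreconnected (Icc b b ×ˢ Icc c d : Set (ℝ × ℝ)) :=
    ((convex_Icc b b).prod (convex_Icc c d)).isPreconnected
  have hSc : ContinuousOn (fun x => f1 x - f2 x) (Icc b b ×ˢ Icc c d : Set (ℝ × ℝ)) :=
    (hf1c.mono hSsub1).sub (hf2c.mono hSsub2)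
  have hbc : ((b, c) : ℝ × ℝ) ∈ (Icc b b ×ˢ Icc c d : Set (ℝ × ℝ)) :=
    ⟨⟨le_rfl, le_rfl⟩, ⟨le_rfl, hcd⟩⟩
  obtain ⟨k0, hk0⟩ := hdiff _ hbc
  have hagree : ∀ x ∈ (Icc b b ×ˢ Icc c d : Set (ℝ × ℝ)), f1 x = f2 x + 2 * k0 := by
    intro x hx
    have := parity_const hSconn hSc hdiff hx hbc
    rw [hk0] at this
    linarith
  refine ⟨fun y => if y.1 ≤ b then f1 y else f2 y + 2 * k0, ?_, ?_⟩
  · intro x hx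
    have hsplit : (Icc a b' ×ˢ Icc c d : Set (ℝ × ℝ)) ⊆
        (Icc a b ×ˢ Icc c d) ∪ (Icc b b' ×ˢ Icc c d) := by
      rintro ⟨y1, y2⟩ ⟨⟨hy1, hy1'⟩, hy2⟩
      rcases le_total y1 b with h | h
      · exact Or.inl ⟨⟨hy1, h⟩, hy2⟩
      · exact Or.inr ⟨⟨h, hy1'⟩, hy2⟩
    apply ContinuousWithinAt.mono _ hsplit
    apply ContinuousWithinAt.union
    · by_cases hxb : x.1 ≤ b
      · have hxl : x ∈ (Icc a b ×ˢ Icc c d : Set (ℝ × ℝ)) := ⟨⟨hx.1.1, hxb⟩, hx.2⟩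
        exact (hf1c x hxl).congr (fun y hy => if_pos hy.1.2) (if_pos hxb)
      · apply continuousWithinAt_of_notMem_closure
        intro hcl
        have hclosed : IsClosed {y : ℝ × ℝ | y.1 ≤ b} := isClosed_le continuous_fst continuous_const
        have hsub' : (Icc a b ×ˢ Icc c d : Set (ℝ × ℝ)) ⊆ {y : ℝ × ℝ | y.1 ≤ b} :=
          fun y hy => hy.1.2
        exact hxb ((hclosed.closure_subset_iff.2 hsub') hcl)
    · by_cases hxb : b ≤ x.1
      · have hxr : x ∈ (Icc b b' ×ˢ Icc c d : Set (ℝ × ℝ)) := ⟨⟨hxb, hx.1.2⟩, hx.2⟩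
        have heq : ∀ y ∈ (Icc b b' ×ˢ Icc c d : Set (ℝ × ℝ)),
            (if y.1 ≤ b then f1 y else f2 y + 2 * k0) = f2 y + 2 * k0 := by
          intro y hy
          by_cases h : y.1 ≤ b
          · rw [if_pos h]
            exact hagree y ⟨⟨hy.1.1, h⟩, hy.2⟩
          · rw [if_neg h]
        exact ((hf2c x hxr).add continuousWithinAt_const).congr heq (heq x hxr)
      · apply continuousWithinAt_of_notMem_closure
        intro hcl
        have hclosed : IsClosed {y : ℝ × ℝ | b ≤ y.1} := isClosed_le continuous_const continuous_fst
        have hsub' : (Icc b b' ×ˢ Icc c d : Set (ℝ × ℝ)) ⊆ {y : ℝ × ℝ | b ≤ y.1} :=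
          fun y hy => hy.1.1
        exact hxb ((hclosed.closure_subset_iff.2 hsub') hcl)
  · intro x hx
    by_cases hxb : x.1 ≤ b
    · have hxl : x ∈ (Icc a b ×ˢ Icc c d : Set (ℝ × ℝ)) := ⟨⟨hx.1.1, hxb⟩, hx.2⟩
      have h := hf1 x hxl
      simp only [if_pos hxb]
      exact h
    · have hxr : x ∈ (Icc b b' ×ˢ Icc c d : Set (ℝ × ℝ)) :=
        ⟨⟨le_of_not_ge hxb, hx.1.2⟩, hx.2⟩
      have h := hf2 x hxr
      simp only [if_neg hxb]
      constructor
      · intro hc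
        obtain ⟨k, hk⟩ := h.1 hc
        exact ⟨k + k0, by rw [hk]; push_cast; ring⟩
      · intro hc
        obtain ⟨k, hk⟩ := h.2 hc
        exact ⟨k + k0, by rw [hk]; push_cast; ring⟩

lemma glue_vert {a b c d d' : ℝ} (hab : a ≤ b) (hcd : c ≤ d) (hdd' : d ≤ d')
    (hsub : (Icc a b ×ˢ Icc c d' : Set (ℝ × ℝ)) ⊆ C1 ∪ C2)
    (h1 : Liftable C1 C2 φ (Icc a b ×ˢ Icc c d))
    (h2 : Liftable C1 C2 φ (Icc a b ×ˢ Icc d d')) :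
    Liftable C1 C2 φ (Icc a b ×ˢ Icc c d') := by
  obtain ⟨f1, hf1c, hf1⟩ := h1
  obtain ⟨f2, hf2c, hf2⟩ := h2
  have hSsub1 : (Icc a b ×ˢ Icc d d : Set (ℝ × ℝ)) ⊆ Icc a b ×ˢ Icc c d :=
    prod_mono subset_rfl (Icc_subset_Icc hcd le_rfl)
  have hSsub2 : (Icc a b ×ˢ Icc d d : Set (ℝ × ℝ)) ⊆ Icc a b ×ˢ Icc d d' :=
    prod_mono subset_rfl (Icc_subset_Icc le_rfl hdd')
  have hSbig : (Icc a b ×ˢ Icc d d : Set (ℝ × ℝ)) ⊆ Icc a b ×ˢ Icc c d' :=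
    prod_mono subset_rfl (Icc_subset_Icc hcd hdd')
  have hdiff : ∀ x ∈ (Icc a b ×ˢ Icc d d : Set (ℝ × ℝ)), ∃ k : ℤ, f1 x - f2 x = 2 * k := by
    intro x hx
    have hx1 := hf1 x (hSsub1 hx)
    have hx2 := hf2 x (hSsub2 hx)
    rcases hsub (hSbig hx) with hc | hc
    · obtain ⟨k1, e1⟩ := hx1.1 hc
      obtain ⟨k2, e2⟩ := hx2.1 hc
      exact ⟨k1 - k2, by rw [e1, e2]; push_cast; ring⟩
    · obtain ⟨k1, e1⟩ := hx1.2 hc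
      obtain ⟨k2, e2⟩ := hx2.2 hc
      exact ⟨k1 - k2, by rw [e1, e2]; push_cast; ring⟩
  have hSconn : IsPreconnected (Icc a b ×ˢ Icc d d : Set (ℝ × ℝ)) :=
    ((convex_Icc a b).prod (convex_Icc d d)).isPreconnected
  have hSc : ContinuousOn (fun x => f1 x - f2 x) (Icc a b ×ˢ Icc d d : Set (ℝ × ℝ)) :=
    (hf1c.mono hSsub1).sub (hf2c.mono hSsub2)
  have hbc : ((a, d) : ℝ × ℝ) ∈ (Icc a b ×ˢ Icc d d : Set (ℝ × ℝ)) :=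
    ⟨⟨le_rfl, hab⟩, ⟨le_rfl, le_rfl⟩⟩
  obtain ⟨k0, hk0⟩ := hdiff _ hbc
  have hagree : ∀ x ∈ (Icc a b ×ˢ Icc d d : Set (ℝ × ℝ)), f1 x = f2 x + 2 * k0 := by
    intro x hx
    have := parity_const hSconn hSc hdiff hx hbc
    rw [hk0] at this
    linarith
  refine ⟨fun y => if y.2 ≤ d then f1 y else f2 y + 2 * k0, ?_, ?_⟩
  · intro x hx
    have hsplit : (Icc a b ×ˢ Icc c d' : Set (ℝ × ℝ)) ⊆
        (Icc a b ×ˢ Icc c d) ∪ (Icc a b ×ˢ Icc d d') := by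
      rintro ⟨y1, y2⟩ ⟨hy1, ⟨hy2, hy2'⟩⟩
      rcases le_total y2 d with h | h
      · exact Or.inl ⟨hy1, ⟨hy2, h⟩⟩
      · exact Or.inr ⟨hy1, ⟨h, hy2'⟩⟩
    apply ContinuousWithinAt.mono _ hsplit
    apply ContinuousWithinAt.union
    · by_cases hxb : x.2 ≤ d
      · have hxl : x ∈ (Icc a b ×ˢ Icc c d : Set (ℝ × ℝ)) := ⟨hx.1, ⟨hx.2.1, hxb⟩⟩
        exact (hf1c x hxl).congr (fun y hy => if_pos hy.2.2) (if_pos hxb)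
      · apply continuousWithinAt_of_notMem_closure
        intro hcl
        have hclosed : IsClosed {y : ℝ × ℝ | y.2 ≤ d} := isClosed_le continuous_snd continuous_const
        have hsub' : (Icc a b ×ˢ Icc c d : Set (ℝ × ℝ)) ⊆ {y : ℝ × ℝ | y.2 ≤ d} :=
          fun y hy => hy.2.2
        exact hxb ((hclosed.closure_subset_iff.2 hsub') hcl)
    · by_cases hxb : d ≤ x.2
      · have hxr : x ∈ (Icc a b ×ˢ Icc d d' : Set (ℝ × ℝ)) := ⟨hx.1, ⟨hxb, hx.2.2⟩⟩
        have heq : ∀ y ∈ (Icc a b ×ˢ Icc d d' : Set (ℝ × ℝ)),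
            (if y.2 ≤ d then f1 y else f2 y + 2 * k0) = f2 y + 2 * k0 := by
          intro y hy
          by_cases h : y.2 ≤ d
          · rw [if_pos h]
            exact hagree y ⟨hy.1, ⟨hy.2.1, h⟩⟩
          · rw [if_neg h]
        exact ((hf2c x hxr).add continuousWithinAt_const).congr heq (heq x hxr)
      · apply continuousWithinAt_of_notMem_closure
        intro hcl
        have hclosed : IsClosed {y : ℝ × ℝ | d ≤ y.2} := isClosed_le continuous_const continuous_snd
        have hsub' : (Icc a b ×ˢ Icc d d' : Set (ℝ × ℝ)) ⊆ {y : ℝ × ℝ | d ≤ y.2} :=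
          fun y hy => hy.2.1
        exact hxb ((hclosed.closure_subset_iff.2 hsub') hcl)
  · intro x hx
    by_cases hxb : x.2 ≤ d
    · have hxl : x ∈ (Icc a b ×ˢ Icc c d : Set (ℝ × ℝ)) := ⟨hx.1, ⟨hx.2.1, hxb⟩⟩
      have h := hf1 x hxl
      simp only [if_pos hxb]
      exact h
    · have hxr : x ∈ (Icc a b ×ˢ Icc d d' : Set (ℝ × ℝ)) :=
        ⟨hx.1, ⟨le_of_not_ge hxb, hx.2.2⟩⟩
      have h := hf2 x hxr
      simp only [if_neg hxb]
      constructor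
      · intro hc
        obtain ⟨k, hk⟩ := h.1 hc
        exact ⟨k + k0, by rw [hk]; push_cast; ring⟩
      · intro hc
        obtain ⟨k, hk⟩ := h.2 hc
        exact ⟨k + k0, by rw [hk]; push_cast; ring⟩

end Glue

section Univ

variable {C1 C2 : Set (ℝ × ℝ)} {φ : ℝ × ℝ → ℝ}

lemma liftable_strip {w0 : ℝ} (hw0 : 0 < w0)
    (hunion : C1 ∪ C2 = unitSquare)
    (hsmall : ∀ a b c d : ℝ, b - a ≤ w0 → d - c ≤ w0 →
      (Icc a b ×ˢ Icc c d : Set (ℝ × ℝ)) ⊆ C1 ∪ C2 →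
      Liftable C1 C2 φ (Icc a b ×ˢ Icc c d))
    {c d : ℝ} (hc : 0 ≤ c) (hcd : c ≤ d) (hd : d ≤ 1) (hdw : d - c ≤ w0) :
    Liftable C1 C2 φ (Icc 0 1 ×ˢ Icc c d) := by
  have hQ : (Icc (0:ℝ) 1 ×ˢ Icc c d : Set (ℝ × ℝ)) ⊆ C1 ∪ C2 := by
    rw [hunion]
    exact prod_mono subset_rfl (Icc_subset_Icc hc hd)
  have hsubint : ∀ u v : ℝ, 0 ≤ u → v ≤ 1 →
      (Icc u v ×ˢ Icc c d : Set (ℝ × ℝ)) ⊆ C1 ∪ C2 := by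
    intro u v hu hv
    rw [hunion]
    exact prod_mono (Icc_subset_Icc hu hv) (Icc_subset_Icc hc hd)
  set S : Set ℝ := {t | t ∈ Icc (0:ℝ) 1 ∧ Liftable C1 C2 φ (Icc 0 t ×ˢ Icc c d)} with hS
  have h0S : (0:ℝ) ∈ S := by
    refine ⟨⟨le_rfl, zero_le_one⟩, hsmall 0 0 c d (by linarith) hdw (hsubint 0 0 le_rfl zero_le_one)⟩
  have hne : S.Nonempty := ⟨0, h0S⟩
  have hbdd : BddAbove S := ⟨1, fun t ht => ht.1.2⟩
  set t0 : ℝ := sSup S with ht0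
  have ht00 : 0 ≤ t0 := le_csSup hbdd h0S
  have ht01 : t0 ≤ 1 := csSup_le hne (fun t ht => ht.1.2)
  have hliftt0 : Liftable C1 C2 φ (Icc 0 t0 ×ˢ Icc c d) := by
    obtain ⟨t, htS, htgt⟩ := exists_lt_of_lt_csSup hne (show t0 - w0 < t0 by linarith)
    have hle : t ≤ t0 := le_csSup hbdd htS
    exact glue_horiz htS.1.1 hle hcd (hsubint 0 t0 le_rfl ht01) htS.2
      (hsmall t t0 c d (by linarith) hdw (hsubint t t0 htS.1.1 ht01))
  by_cases h1 : t0 < 1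
  · exfalso
    set t' : ℝ := min (t0 + w0) 1 with ht'
    have htt' : t0 < t' := lt_min (by linarith) h1
    have ht'1 : t' ≤ 1 := min_le_right _ _
    have ht'0 : 0 ≤ t' := le_trans ht00 htt'.le
    have ht'S : t' ∈ S := by
      refine ⟨⟨ht'0, ht'1⟩, ?_⟩
      exact glue_horiz ht00 htt'.le hcd (hsubint 0 t' le_rfl ht'1) hliftt0
        (hsmall t0 t' c d (by
          have := min_le_left (t0 + w0) 1
          linarith) hdw (hsubint t0 t' ht00 ht'1))
    exact absurd (le_csSup hbdd ht'S) (not_le.2 htt')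
  · have : t0 = 1 := le_antisymm ht01 (not_lt.1 h1)
    rwa [this] at hliftt0

lemma liftable_unitSquare {w0 : ℝ} (hw0 : 0 < w0)
    (hunion : C1 ∪ C2 = unitSquare)
    (hsmall : ∀ a b c d : ℝ, b - a ≤ w0 → d - c ≤ w0 →
      (Icc a b ×ˢ Icc c d : Set (ℝ × ℝ)) ⊆ C1 ∪ C2 →
      Liftable C1 C2 φ (Icc a b ×ˢ Icc c d)) :
    Liftable C1 C2 φ unitSquare := by
  have hsubint : ∀ u v : ℝ, 0 ≤ u → v ≤ 1 →
      (Icc (0:ℝ) 1 ×ˢ Icc u v : Set (ℝ × ℝ)) ⊆ C1 ∪ C2 := by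
    intro u v hu hv
    rw [hunion]
    exact prod_mono subset_rfl (Icc_subset_Icc hu hv)
  set S : Set ℝ := {t | t ∈ Icc (0:ℝ) 1 ∧ Liftable C1 C2 φ (Icc 0 1 ×ˢ Icc 0 t)} with hS
  have h0S : (0:ℝ) ∈ S :=
    ⟨⟨le_rfl, zero_le_one⟩, liftable_strip hw0 hunion hsmall le_rfl le_rfl zero_le_one (by linarith)⟩
  have hne : S.Nonempty := ⟨0, h0S⟩
  have hbdd : BddAbove S := ⟨1, fun t ht => ht.1.2⟩
  set t0 : ℝ := sSup S with ht0
  have ht00 : 0 ≤ t0 := le_csSup hbdd h0S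
  have ht01 : t0 ≤ 1 := csSup_le hne (fun t ht => ht.1.2)
  have hliftt0 : Liftable C1 C2 φ (Icc 0 1 ×ˢ Icc 0 t0) := by
    obtain ⟨t, htS, htgt⟩ := exists_lt_of_lt_csSup hne (show t0 - w0 < t0 by linarith)
    have hle : t ≤ t0 := le_csSup hbdd htS
    exact glue_vert zero_le_one htS.1.1 hle (hsubint 0 t0 le_rfl ht01) htS.2
      (liftable_strip hw0 hunion hsmall htS.1.1 hle ht01 (by linarith))
  by_cases h1 : t0 < 1
  · exfalso
    set t' : ℝ := min (t0 + w0) 1 with ht'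
    have htt' : t0 < t' := lt_min (by linarith) h1
    have ht'1 : t' ≤ 1 := min_le_right _ _
    have ht'0 : 0 ≤ t' := le_trans ht00 htt'.le
    have ht'S : t' ∈ S := by
      refine ⟨⟨ht'0, ht'1⟩, ?_⟩
      exact glue_vert zero_le_one ht00 htt'.le (hsubint 0 t' le_rfl ht'1) hliftt0
        (liftable_strip hw0 hunion hsmall ht00 htt'.le ht'1 (by
          have := min_le_left (t0 + w0) 1
          linarith))
    exact absurd (le_csSup hbdd ht'S) (not_le.2 htt')
  · have heq : t0 = 1 := le_antisymm ht01 (not_lt.1 h1)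
    rw [heq] at hliftt0
    exact hliftt0

end Univ

set_option maxHeartbeats 2000000 in
lemma key (C1 C2 : Set (ℝ × ℝ)) (φ : ℝ × ℝ → ℝ)
    (hC1 : IsClosed C1) (hC2 : IsClosed C2) (hφ : Continuous φ)
    (hunion : C1 ∪ C2 = unitSquare)
    (hval : ∀ x ∈ C1 ∩ C2, φ x = 0 ∨ φ x = 1)
    (ha : ((0:ℝ), (1:ℝ)) ∈ C1 ∩ C2) (haφ : φ ((0:ℝ), (1:ℝ)) = 0)
    (hb : ((1:ℝ), (1:ℝ)) ∈ C1 ∩ C2) (hbφ : φ ((1:ℝ), (1:ℝ)) = 1)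
    (hT : (Icc (0:ℝ) 1 ×ˢ ({1} : Set ℝ) : Set (ℝ × ℝ)) ⊆ C1)
    (hE : ((Icc (0:ℝ) 1 ×ˢ ({0} : Set ℝ) ∪ ({0} : Set ℝ) ×ˢ Icc (0:ℝ) 1
      ∪ ({1} : Set ℝ) ×ˢ Icc (0:ℝ) 1 : Set (ℝ × ℝ))) ⊆ C2) : False := by
  have hne1 : C1.Nonempty := ⟨_, ha.1⟩
  have hne2 : C2.Nonempty := ⟨_, ha.2⟩
  have hC1Q : C1 ⊆ unitSquare := by rw [← hunion]; exact subset_union_left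
  have hC2Q : C2 ⊆ unitSquare := by rw [← hunion]; exact subset_union_right
  -- the two "vertices" sets
  set NN : Set (ℝ × ℝ) := (C1 ∩ C2) ∩ {x | φ x = 0} with hNN
  set PP : Set (ℝ × ℝ) := (C1 ∩ C2) ∩ {x | φ x = 1} with hPP
  have hNNc : IsClosed NN := (hC1.inter hC2).inter (isClosed_eq hφ continuous_const)
  have hPPc : IsClosed PP := (hC1.inter hC2).inter (isClosed_eq hφ continuous_const)
  have hQcompact : IsCompact unitSquare := isCompact_Icc.prod isCompact_Icc
  have hNNcomp : IsCompact NN :=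
    hQcompact.of_isClosed_subset hNNc (fun x hx => hC1Q hx.1.1)
  have hNNne : NN.Nonempty := ⟨_, ⟨ha, haφ⟩⟩
  have hPPne : PP.Nonempty := ⟨_, ⟨hb, hbφ⟩⟩
  -- positive distance between NN and PP
  obtain ⟨u0, hu0, hmin⟩ := hNNcomp.exists_isMinOn hNNne (continuous_infDist_pt PP).continuousOn
  set δ : ℝ := infDist u0 PP with hδ
  have hδpos : 0 < δ := by
    rcases eq_or_lt_of_le (infDist_nonneg : 0 ≤ infDist u0 PP) with h | h
    · exfalso
      have : u0 ∈ PP := by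
        rw [← hPPc.closure_eq]
        exact (mem_closure_iff_infDist_zero hPPne).2 h.symm
      have h0 : φ u0 = 0 := hu0.2
      have h1 : φ u0 = 1 := this.2
      rw [h0] at h1
      norm_num at h1
    · exact h
  have hsep : ∀ u ∈ NN, ∀ v ∈ PP, δ ≤ dist u v := by
    intro u hu v hv
    exact le_trans (hmin hu) (infDist_le_dist_of_mem hv)
  -- small rectangles are liftable
  have hsmall : ∀ a b c d : ℝ, b - a ≤ δ / 2 → d - c ≤ δ / 2 →
      (Icc a b ×ˢ Icc c d : Set (ℝ × ℝ)) ⊆ C1 ∪ C2 →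
      Liftable C1 C2 φ (Icc a b ×ˢ Icc c d) := by
    intro a b c d hba hdc hsub
    by_cases hP : ∃ x ∈ (Icc a b ×ˢ Icc c d : Set (ℝ × ℝ)), x ∈ PP
    · -- rectangle meets PP, so it misses NN: use liftP
      obtain ⟨v, hvR, hvP⟩ := hP
      have hN : ∀ x ∈ (Icc a b ×ˢ Icc c d : Set (ℝ × ℝ)), ¬(x ∈ C1 ∩ C2 ∧ φ x = 0) := by
        rintro x hx ⟨hm, h0⟩
        have hxN : x ∈ NN := ⟨hm, h0⟩
        have hdist : dist x v ≤ δ / 2 := by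
          rw [Prod.dist_eq]
          apply max_le
          · exact le_trans (Real.dist_le_of_mem_Icc hx.1 hvR.1) (by linarith)
          · exact le_trans (Real.dist_le_of_mem_Icc hx.2 hvR.2) (by linarith)
        have := hsep x hxN v hvP
        linarith
      exact ⟨_, isLift_liftP hC1 hC2 hne1 hne2 hφ hval hsub hN⟩
    · push_neg at hP
      have hPmiss : ∀ x ∈ (Icc a b ×ˢ Icc c d : Set (ℝ × ℝ)), ¬(x ∈ C1 ∩ C2 ∧ φ x = 1) := by
        rintro x hx ⟨hm, h1⟩
        exact hP x hx ⟨hm, h1⟩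
      exact ⟨_, isLift_liftN hC1 hC2 hne1 hne2 hφ hval hsub hPmiss⟩
  -- global lift
  obtain ⟨G, hGc, hG⟩ := liftable_unitSquare (by linarith : (0:ℝ) < δ / 2) hunion hsmall
  -- the top edge
  set T : Set (ℝ × ℝ) := Icc (0:ℝ) 1 ×ˢ ({1} : Set ℝ) with hTdef
  set EE : Set (ℝ × ℝ) := Icc (0:ℝ) 1 ×ˢ ({0} : Set ℝ) ∪ ({0} : Set ℝ) ×ˢ Icc (0:ℝ) 1
      ∪ ({1} : Set ℝ) ×ˢ Icc (0:ℝ) 1 with hEdef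
  set pa : ℝ × ℝ := ((0:ℝ), (1:ℝ)) with hpa
  set pb : ℝ × ℝ := ((1:ℝ), (1:ℝ)) with hpb
  have haT : pa ∈ T := ⟨⟨le_rfl, zero_le_one⟩, rfl⟩
  have hbT : pb ∈ T := ⟨⟨zero_le_one, le_rfl⟩, rfl⟩
  have haE : pa ∈ EE := Or.inl (Or.inr ⟨rfl, ⟨zero_le_one, le_rfl⟩⟩)
  have hbE : pb ∈ EE := Or.inr ⟨rfl, ⟨zero_le_one, le_rfl⟩⟩
  have hTQ : T ⊆ unitSquare := hT.trans hC1Q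
  have hEQ : EE ⊆ unitSquare := hE.trans hC2Q
  have hTconn : IsPreconnected T := ((convex_Icc _ _).prod (convex_singleton _)).isPreconnected
  have hEconn : IsPreconnected EE := by
    apply IsPreconnected.union ((1:ℝ), (0:ℝ))
    · exact Or.inl ⟨⟨zero_le_one, le_rfl⟩, rfl⟩
    · exact ⟨rfl, ⟨le_rfl, zero_le_one⟩⟩
    · apply IsPreconnected.union ((0:ℝ), (0:ℝ))
      · exact ⟨⟨le_rfl, zero_le_one⟩, rfl⟩
      · exact ⟨rfl, ⟨le_rfl, zero_le_one⟩⟩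
      · exact ((convex_Icc _ _).prod (convex_singleton _)).isPreconnected
      · exact ((convex_singleton _).prod (convex_Icc _ _)).isPreconnected
    · exact ((convex_singleton _).prod (convex_Icc _ _)).isPreconnected
  -- on T, G - φ is an even integer, hence constant
  have hTint : ∀ x ∈ T, ∃ k : ℤ, G x - φ x = 2 * k := by
    intro x hx
    obtain ⟨k, hk⟩ := (hG x (hTQ hx)).1 (hT hx)
    exact ⟨k, by rw [hk]; ring⟩
  have hTc : ContinuousOn (fun x => G x - φ x) T := (hGc.mono hTQ).sub hφ.continuousOn
  have heqT := parity_const hTconn hTc hTint haT hbT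
  -- on EE, G + φ is 2 + even integer, hence constant
  have hEint : ∀ x ∈ EE, ∃ k : ℤ, G x + φ x = 2 * k := by
    intro x hx
    obtain ⟨k, hk⟩ := (hG x (hEQ hx)).2 (hE hx)
    exact ⟨k + 1, by rw [hk]; push_cast; ring⟩
  have hEc : ContinuousOn (fun x => G x + φ x) EE := (hGc.mono hEQ).add hφ.continuousOn
  have heqE := parity_const hEconn hEc hEint haE hbE
  rw [haφ, hbφ] at heqT heqE
  linarith

set_option maxHeartbeats 2000000 in
theorem no_five_decomposition_of_unit_square :
    ¬ ∃ A : Fin 5 → Set (ℝ × ℝ),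
      (∀ i, A i ⊆ unitSquare) ∧
      (∀ i j, i ≠ j → A i ∩ A j = ∅) ∧
      (⋃ i, A i) = unitSquare ∧
      ((0, 1) ∈ A 2) ∧ ((1, 1) ∈ A 1) ∧
      (A 4 ∩ Icc 0 1 ×ˢ ({1} : Set ℝ) = ∅) ∧
      (A 0 ∩ (Icc 0 1 ×ˢ ({0} : Set ℝ) ∪
        ({0} : Set ℝ) ×ˢ Icc 0 1 ∪ ({1} : Set ℝ) ×ˢ Icc 0 1) = ∅) ∧
      relClosed unitSquare (A 3) ∧
      relClosed unitSquare (A 2 ∪ A 4) ∧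
      relClosed unitSquare (A 1 ∪ A 3 ∪ A 4) ∧
      relClosed unitSquare (unitSquare \ A 0) ∧
      relFrontier unitSquare (A 0) ⊆ A 2 ∪ A 3 ∪ A 4 := by
  rintro ⟨A, hsub, hdisj, hcover, h02, h11, h4T, h0E, hc3, hc24, hc134, hc0, hfr⟩
  have hQclosed : IsClosed unitSquare := isClosed_Icc.prod isClosed_Icc
  -- pairwise disjointness helper
  have hdd : ∀ i j : Fin 5, i ≠ j → ∀ x, x ∈ A i → x ∈ A j → False := by
    intro i j hij x h1 h2
    exact (eq_empty_iff_forall_notMem.1 (hdisj i j hij) x) ⟨h1, h2⟩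
  -- relClosed → IsClosed
  have hcl : ∀ S : Set (ℝ × ℝ), S ⊆ unitSquare → relClosed unitSquare S → IsClosed S := by
    intro S hS h
    apply isClosed_of_closure_subset
    intro x hx
    exact h ⟨hx, closure_minimal hS hQclosed hx⟩
  set T : Set (ℝ × ℝ) := Icc (0:ℝ) 1 ×ˢ ({1} : Set ℝ) with hTdef
  set EE : Set (ℝ × ℝ) := Icc (0:ℝ) 1 ×ˢ ({0} : Set ℝ) ∪ ({0} : Set ℝ) ×ˢ Icc (0:ℝ) 1
      ∪ ({1} : Set ℝ) ×ˢ Icc (0:ℝ) 1 with hEdef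
  set N : Set (ℝ × ℝ) := A 2 ∪ A 4 with hNdef
  set P : Set (ℝ × ℝ) := A 3 ∪ (A 1 ∩ T) with hPdef
  have hNQ : N ⊆ unitSquare := union_subset (hsub 2) (hsub 4)
  have hTQ : T ⊆ unitSquare := by
    rintro ⟨x1, x2⟩ ⟨hx1, hx2⟩
    exact ⟨hx1, by rw [show x2 = 1 from hx2]; exact ⟨zero_le_one, le_rfl⟩⟩
  have hPQ : P ⊆ unitSquare := union_subset (hsub 3) ((inter_subset_left).trans (hsub 1))
  have hNc : IsClosed N := hcl N hNQ hc24
  have hA3c : IsClosed (A 3) := hcl (A 3) (hsub 3) hc3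
  have hF1c : IsClosed (A 1 ∪ A 3 ∪ A 4) :=
    hcl _ (union_subset (union_subset (hsub 1) (hsub 3)) (hsub 4)) hc134
  have hC2c : IsClosed (unitSquare \ A 0) := hcl _ diff_subset hc0
  have hTc : IsClosed T := isClosed_Icc.prod isClosed_singleton
  have hPc : IsClosed P := by
    apply isClosed_of_closure_subset
    intro x hx
    rw [closure_union] at hx
    rcases hx with hx | hx
    · exact Or.inl (hA3c.closure_eq ▸ hx)
    · have h1 : x ∈ A 1 ∪ A 3 ∪ A 4 := by
        rw [← hF1c.closure_eq]
        exact closure_mono (inter_subset_left.trans (subset_union_left.trans subset_union_left)) hx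
      have h2 : x ∈ T := by
        rw [← hTc.closure_eq]
        exact closure_mono inter_subset_right hx
      rcases h1 with (h1 | h1) | h1
      · exact Or.inr ⟨h1, h2⟩
      · exact Or.inl h1
      · exact (eq_empty_iff_forall_notMem.1 h4T x ⟨h1, h2⟩).elim
  set C1 : Set (ℝ × ℝ) := (closure (A 0) ∩ unitSquare) ∪ (N ∪ P) with hC1def
  set C2 : Set (ℝ × ℝ) := unitSquare \ A 0 with hC2def
  have hC1c : IsClosed C1 := ((isClosed_closure.inter hQclosed)).union (hNc.union hPc)
  -- frontier fact
  have hfr' : ∀ x, x ∈ closure (A 0) → x ∈ unitSquare → x ∉ A 0 → x ∈ A 2 ∪ A 3 ∪ A 4 := by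
    intro x h1 h2 h3
    exact hfr ⟨⟨h2, h1⟩, subset_closure ⟨h2, h3⟩⟩
  have hcov : ∀ x ∈ unitSquare, ∃ i, x ∈ A i := by
    intro x hx
    exact mem_iUnion.1 (by rw [hcover]; exact hx)
  have hunion : C1 ∪ C2 = unitSquare := by
    apply Subset.antisymm
    · apply union_subset
      · exact union_subset inter_subset_right (union_subset hNQ hPQ)
      · exact diff_subset
    · intro x hx
      obtain ⟨i, hi⟩ := hcov x hx
      fin_cases i
      · exact Or.inl (Or.inl ⟨subset_closure hi, hx⟩)
      · exact Or.inr ⟨hx, fun h0 => hdd 1 0 (by decide) x hi h0⟩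
      · exact Or.inl (Or.inr (Or.inl (Or.inl hi)))
      · exact Or.inl (Or.inr (Or.inr (Or.inl hi)))
      · exact Or.inl (Or.inr (Or.inl (Or.inr hi)))
  have hNPsubC2 : N ∪ P ⊆ C2 := by
    rintro x (hx | hx)
    · refine ⟨hNQ hx, ?_⟩
      rcases hx with h | h
      · exact fun h0 => hdd 0 2 (by decide) x h0 h
      · exact fun h0 => hdd 0 4 (by decide) x h0 h
    · refine ⟨hPQ hx, ?_⟩
      rcases hx with h | h
      · exact fun h0 => hdd 0 3 (by decide) x h0 h
      · exact fun h0 => hdd 0 1 (by decide) x h0 h.1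
  have hinter : C1 ∩ C2 = N ∪ P := by
    apply Subset.antisymm
    · intro x hx
      obtain ⟨h1, h2⟩ := hx
      rcases h1 with h0 | hNP
      · rcases hfr' x h0.1 h0.2 h2.2 with (h | h) | h
        · exact Or.inl (Or.inl h)
        · exact Or.inr (Or.inl h)
        · exact Or.inl (Or.inr h)
      · exact hNP
    · intro x hx
      exact ⟨Or.inr hx, hNPsubC2 hx⟩
  -- N and P are disjoint
  have hNP : ∀ x, x ∈ N → x ∈ P → False := by
    rintro x (h | h) (h' | h')
    · exact hdd 2 3 (by decide) x h h'
    · exact hdd 2 1 (by decide) x h h'.1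
    · exact hdd 4 3 (by decide) x h h'
    · exact hdd 4 1 (by decide) x h h'.1
  -- nonempty
  have haN : ((0:ℝ), (1:ℝ)) ∈ N := Or.inl h02
  have hbP : ((1:ℝ), (1:ℝ)) ∈ P := Or.inr ⟨h11, ⟨⟨zero_le_one, le_rfl⟩, rfl⟩⟩
  have hNne : N.Nonempty := ⟨_, haN⟩
  have hPne : P.Nonempty := ⟨_, hbP⟩
  -- Urysohn-type function
  set φ : ℝ × ℝ → ℝ := fun x => infDist x N / (infDist x N + infDist x P) with hφdef
  have hdenom : ∀ x, infDist x N + infDist x P ≠ 0 := by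
    intro x h
    have h1 : (0:ℝ) ≤ infDist x N := infDist_nonneg
    have h2 : (0:ℝ) ≤ infDist x P := infDist_nonneg
    have e1 : infDist x N = 0 := by linarith
    have e2 : infDist x P = 0 := by linarith
    have hxN : x ∈ N := by rw [← hNc.closure_eq]; exact (mem_closure_iff_infDist_zero hNne).2 e1
    have hxP : x ∈ P := by rw [← hPc.closure_eq]; exact (mem_closure_iff_infDist_zero hPne).2 e2
    exact hNP x hxN hxP
  have hφcont : Continuous φ :=
    (continuous_infDist_pt N).div ((continuous_infDist_pt N).add (continuous_infDist_pt P)) hdenom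
  have hφ0 : ∀ x ∈ N, φ x = 0 := by
    intro x hx
    simp only [hφdef, infDist_zero_of_mem hx, zero_div]
  have hφ1 : ∀ x ∈ P, φ x = 1 := by
    intro x hx
    have e2 : infDist x P = 0 := infDist_zero_of_mem hx
    have hn0 : infDist x N ≠ 0 := by
      intro h
      exact hdenom x (by rw [h, e2]; ring)
    simp only [hφdef, e2, add_zero, div_self hn0]
  have hval : ∀ x ∈ C1 ∩ C2, φ x = 0 ∨ φ x = 1 := by
    intro x hx
    rw [hinter] at hx
    rcases hx with h | h
    · exact Or.inl (hφ0 x h)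
    · exact Or.inr (hφ1 x h)
  have ha : ((0:ℝ), (1:ℝ)) ∈ C1 ∩ C2 := by rw [hinter]; exact Or.inl haN
  have hb : ((1:ℝ), (1:ℝ)) ∈ C1 ∩ C2 := by rw [hinter]; exact Or.inr hbP
  have hTC1 : T ⊆ C1 := by
    intro x hx
    obtain ⟨i, hi⟩ := hcov x (hTQ hx)
    fin_cases i
    · exact Or.inl ⟨subset_closure hi, hTQ hx⟩
    · exact Or.inr (Or.inr (Or.inr ⟨hi, hx⟩))
    · exact Or.inr (Or.inl (Or.inl hi))
    · exact Or.inr (Or.inr (Or.inl hi))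
    · exact Or.inr (Or.inl (Or.inr hi))
  have hEQ : EE ⊆ unitSquare := by
    rintro ⟨x1, x2⟩ ((hx | hx) | hx)
    · exact ⟨hx.1, by rw [show x2 = 0 from hx.2]; exact ⟨le_rfl, zero_le_one⟩⟩
    · exact ⟨by rw [show x1 = 0 from hx.1]; exact ⟨le_rfl, zero_le_one⟩, hx.2⟩
    · exact ⟨by rw [show x1 = 1 from hx.1]; exact ⟨zero_le_one, le_rfl⟩, hx.2⟩
  have hEC2 : EE ⊆ C2 := by
    intro x hx
    refine ⟨hEQ hx, fun h0 => ?_⟩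
    exact (eq_empty_iff_forall_notMem.1 h0E x) ⟨h0, hx⟩
  exact key C1 C2 φ hC1c hC2c hφcont hunion hval ha (hφ0 _ haN) hb (hφ1 _ hbP) hTC1 hEC2
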